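/- arXiv:1911.04334 — 2 statements merged into one kernel-verified Lean document; each statement's English description precedes it below -/
import Mathlib

section
/- Let $(\alpha_k)$ be a sequence of positive reals such that $\frac{\sum_{i=0}^k \alpha_i^2}{(\sum_{i=0}^k \alpha_i)^2} \le \frac{N}{k^\gamma}$ for all $k\ge 1$, for some $N>0$ and $\gamma>1/2$. Let $(X_k)$ be i.i.d. real random variables with mean $\mu$ and $\mathbb{E}X_0^4 < +\infty$. Then almost surely $\frac{\sum_{i=0}^k \alpha_i X_i}{\sum_{i=0}^k \alpha_i} \to \mu$ as $k\to\infty$. -/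
open MeasureTheory ProbabilityTheory Finset Filter

lemma abs_pow_le_one_add (x : ℝ) (j : ℕ) (hj : j ≤ 4) : |x ^ j| ≤ 1 + x ^ 4 := by
  rw [abs_pow]
  have hx4 : x ^ 4 = |x| ^ 4 := by rw [← abs_pow, abs_of_nonneg (by positivity)]
  rcases le_or_gt |x| 1 with h | h
  · have : |x| ^ j ≤ 1 := pow_le_one₀ (abs_nonneg x) h
    nlinarith [pow_nonneg (abs_nonneg x) 4]
  · have h1 : |x| ^ j ≤ |x| ^ 4 := pow_le_pow_right₀ h.le hj
    nlinarith

lemma aux_pair {Ω : Type*} [MeasurableSpace Ω] {P : Measure Ω} [IsProbabilityMeasure P]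
    {T Z : Ω → ℝ} (h : IndepFun T Z P)
    (hT : ∀ j, 1 ≤ j → j ≤ 4 → Integrable (fun ω => T ω ^ j) P)
    (hZ : ∀ j, 1 ≤ j → j ≤ 4 → Integrable (fun ω => Z ω ^ j) P)
    (hT0 : ∫ ω, T ω ∂P = 0) (hZ0 : ∫ ω, Z ω ∂P = 0) :
    (∀ j, 1 ≤ j → j ≤ 4 → Integrable (fun ω => (T ω + Z ω) ^ j) P) ∧
    (∫ ω, (T ω + Z ω) ∂P = 0) ∧
    (∫ ω, (T ω + Z ω) ^ 2 ∂P = ∫ ω, T ω ^ 2 ∂P + ∫ ω, Z ω ^ 2 ∂P) ∧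
    (∫ ω, (T ω + Z ω) ^ 4 ∂P =
      ∫ ω, T ω ^ 4 ∂P + 6 * ((∫ ω, T ω ^ 2 ∂P) * (∫ ω, Z ω ^ 2 ∂P)) + ∫ ω, Z ω ^ 4 ∂P) := by
  have hpow : ∀ i j : ℕ, IndepFun (fun ω => T ω ^ i) (fun ω => Z ω ^ j) P :=
    fun i j => h.comp (measurable_id.pow_const i) (measurable_id.pow_const j)
  have hMul : ∀ i j : ℕ, 1 ≤ i → i ≤ 4 → 1 ≤ j → j ≤ 4 →
      Integrable (fun ω => T ω ^ i * Z ω ^ j) P :=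
    fun i j hi1 hi4 hj1 hj4 => (hpow i j).integrable_mul (hT i hi1 hi4) (hZ j hj1 hj4)
  have hIMul : ∀ i j : ℕ, 1 ≤ i → i ≤ 4 → 1 ≤ j → j ≤ 4 →
      ∫ ω, T ω ^ i * Z ω ^ j ∂P = (∫ ω, T ω ^ i ∂P) * ∫ ω, Z ω ^ j ∂P :=
    fun i j hi1 hi4 hj1 hj4 =>
      (hpow i j).integral_fun_mul_eq_mul_integral (hT i hi1 hi4).aestronglyMeasurable
        (hZ j hj1 hj4).aestronglyMeasurable
  have hT1 : Integrable T P := by simpa using hT 1 le_rfl (by norm_num)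
  have hZ1 : Integrable Z P := by simpa using hZ 1 le_rfl (by norm_num)
  have key : ∀ j, 1 ≤ j → j ≤ 4 → Integrable (fun ω => (T ω + Z ω) ^ j) P := by
    intro j h1 h4
    interval_cases j
    · simp only [pow_one]; exact hT1.add hZ1
    · have e : (fun ω => (T ω + Z ω) ^ 2)
          = fun ω => T ω ^ 2 + (2 * (T ω ^ 1 * Z ω ^ 1) + Z ω ^ 2) := by funext ω; ring
      rw [e]
      exact (hT 2 one_le_two (by norm_num)).add
        (((hMul 1 1 le_rfl (by norm_num) le_rfl (by norm_num)).const_mul 2).add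
          (hZ 2 one_le_two (by norm_num)))
    · have e : (fun ω => (T ω + Z ω) ^ 3)
          = fun ω => T ω ^ 3 + (3 * (T ω ^ 2 * Z ω ^ 1) + (3 * (T ω ^ 1 * Z ω ^ 2) + Z ω ^ 3)) := by
        funext ω; ring
      rw [e]
      exact (hT 3 (by norm_num) (by norm_num)).add
        (((hMul 2 1 (by norm_num) (by norm_num) le_rfl (by norm_num)).const_mul 3).add
          (((hMul 1 2 le_rfl (by norm_num) (by norm_num) (by norm_num)).const_mul 3).add
            (hZ 3 (by norm_num) (by norm_num))))
    · have e : (fun ω => (T ω + Z ω) ^ 4)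
          = fun ω => T ω ^ 4 + (4 * (T ω ^ 3 * Z ω ^ 1) + (6 * (T ω ^ 2 * Z ω ^ 2) +
              (4 * (T ω ^ 1 * Z ω ^ 3) + Z ω ^ 4))) := by funext ω; ring
      rw [e]
      exact (hT 4 (by norm_num) le_rfl).add
        (((hMul 3 1 (by norm_num) (by norm_num) le_rfl (by norm_num)).const_mul 4).add
          (((hMul 2 2 (by norm_num) (by norm_num) (by norm_num) (by norm_num)).const_mul 6).add
            (((hMul 1 3 le_rfl (by norm_num) (by norm_num) (by norm_num)).const_mul 4).add
              (hZ 4 (by norm_num) le_rfl))))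
  have g21 : Integrable (fun ω => 2 * (T ω ^ 1 * Z ω ^ 1) + Z ω ^ 2) P :=
    ((hMul 1 1 le_rfl (by norm_num) le_rfl (by norm_num)).const_mul 2).add
      (hZ 2 one_le_two (by norm_num))
  have g41 : Integrable (fun ω => 4 * (T ω ^ 1 * Z ω ^ 3) + Z ω ^ 4) P :=
    ((hMul 1 3 le_rfl (by norm_num) (by norm_num) (by norm_num)).const_mul 4).add
      (hZ 4 (by norm_num) le_rfl)
  have g42 : Integrable (fun ω => 6 * (T ω ^ 2 * Z ω ^ 2) +
      (4 * (T ω ^ 1 * Z ω ^ 3) + Z ω ^ 4)) P :=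
    ((hMul 2 2 (by norm_num) (by norm_num) (by norm_num) (by norm_num)).const_mul 6).add g41
  have g43 : Integrable (fun ω => 4 * (T ω ^ 3 * Z ω ^ 1) + (6 * (T ω ^ 2 * Z ω ^ 2) +
      (4 * (T ω ^ 1 * Z ω ^ 3) + Z ω ^ 4))) P :=
    ((hMul 3 1 (by norm_num) (by norm_num) le_rfl (by norm_num)).const_mul 4).add g42
  refine ⟨key, ?_, ?_, ?_⟩
  · rw [integral_add hT1 hZ1, hT0, hZ0, add_zero]
  · have e : (fun ω => (T ω + Z ω) ^ 2)
        = fun ω => T ω ^ 2 + (2 * (T ω ^ 1 * Z ω ^ 1) + Z ω ^ 2) := by funext ω; ring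
    rw [e, integral_add (hT 2 one_le_two (by norm_num)) g21,
      integral_add ((hMul 1 1 le_rfl (by norm_num) le_rfl (by norm_num)).const_mul 2)
        (hZ 2 one_le_two (by norm_num)),
      integral_const_mul, hIMul 1 1 le_rfl (by norm_num) le_rfl (by norm_num)]
    simp only [pow_one]
    rw [hT0, hZ0]
    ring
  · have e : (fun ω => (T ω + Z ω) ^ 4)
        = fun ω => T ω ^ 4 + (4 * (T ω ^ 3 * Z ω ^ 1) + (6 * (T ω ^ 2 * Z ω ^ 2) +
            (4 * (T ω ^ 1 * Z ω ^ 3) + Z ω ^ 4))) := by funext ω; ring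
    rw [e, integral_add (hT 4 (by norm_num) le_rfl) g43,
      integral_add ((hMul 3 1 (by norm_num) (by norm_num) le_rfl (by norm_num)).const_mul 4) g42,
      integral_add
        ((hMul 2 2 (by norm_num) (by norm_num) (by norm_num) (by norm_num)).const_mul 6) g41,
      integral_add ((hMul 1 3 le_rfl (by norm_num) (by norm_num) (by norm_num)).const_mul 4)
        (hZ 4 (by norm_num) le_rfl),
      integral_const_mul, integral_const_mul, integral_const_mul,
      hIMul 3 1 (by norm_num) (by norm_num) le_rfl (by norm_num),
      hIMul 2 2 (by norm_num) (by norm_num) (by norm_num) (by norm_num),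
      hIMul 1 3 le_rfl (by norm_num) (by norm_num) (by norm_num)]
    simp only [pow_one]
    rw [hT0, hZ0]
    ring
lemma aux_sum {Ω : Type*} [MeasurableSpace Ω] {P : Measure Ω} [IsProbabilityMeasure P]
    (f : ℕ → Ω → ℝ) (hfm : ∀ i, Measurable (f i))
    (hindep : iIndepFun f P)
    (hint : ∀ i j, 1 ≤ j → j ≤ 4 → Integrable (fun ω => f i ω ^ j) P)
    (h0 : ∀ i, ∫ ω, f i ω ∂P = 0)
    (α : ℕ → ℝ) (m2 m4 : ℝ) (hm2nn : 0 ≤ m2) (hm4nn : 0 ≤ m4)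
    (hv : ∀ i, ∫ ω, f i ω ^ 2 ∂P = α i ^ 2 * m2)
    (hq : ∀ i, ∫ ω, f i ω ^ 4 ∂P ≤ α i ^ 4 * m4) :
    ∀ n, (∀ j, 1 ≤ j → j ≤ 4 → Integrable (fun ω => (∑ i ∈ range n, f i ω) ^ j) P)
      ∧ (∫ ω, (∑ i ∈ range n, f i ω) ∂P = 0)
      ∧ (∫ ω, (∑ i ∈ range n, f i ω) ^ 2 ∂P = m2 * ∑ i ∈ range n, α i ^ 2)
      ∧ (∫ ω, (∑ i ∈ range n, f i ω) ^ 4 ∂P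
          ≤ (m4 + 3 * m2 ^ 2) * (∑ i ∈ range n, α i ^ 2) ^ 2) := by
  intro n
  induction n with
  | zero =>
    refine ⟨fun j h1 h4 => ?_, by simp, by simp, by simp⟩
    simp only [range_zero, sum_empty, zero_pow (by omega : j ≠ 0)]
    exact integrable_const 0
  | succ n ih =>
    obtain ⟨ih1, ih2, ih3, ih4⟩ := ih
    have hTZ : IndepFun (fun ω => ∑ i ∈ range n, f i ω) (f n) P := by
      have h := hindep.indepFun_sum_range_succ hfm n
      have he : (∑ j ∈ range n, f j) = fun ω => ∑ i ∈ range n, f i ω := by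
        funext ω; simp
      rwa [he] at h
    obtain ⟨p1, p2, p3, p4⟩ := aux_pair hTZ ih1 (hint n) ih2 (h0 n)
    have hsucc : ∀ ω, ∑ i ∈ range (n + 1), f i ω = (∑ i ∈ range n, f i ω) + f n ω :=
      fun ω => sum_range_succ _ n
    have he1 : ∀ j : ℕ, (fun ω => (∑ i ∈ range (n + 1), f i ω) ^ j)
        = fun ω => ((∑ i ∈ range n, f i ω) + f n ω) ^ j := by
      intro j; funext ω; rw [hsucc]
    have hBnn : (0:ℝ) ≤ ∑ i ∈ range n, α i ^ 2 := sum_nonneg fun i _ => sq_nonneg _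
    refine ⟨fun j h1 h4 => by rw [he1 j]; exact p1 j h1 h4, ?_, ?_, ?_⟩
    · rw [show (fun ω => ∑ i ∈ range (n + 1), f i ω)
        = fun ω => (∑ i ∈ range n, f i ω) + f n ω from funext hsucc]
      exact p2
    · rw [he1 2, p3, ih3, hv n, sum_range_succ]
      ring
    · rw [he1 4, p4, ih3, hv n]
      have h2 := hq n
      rw [sum_range_succ]
      have han : (0:ℝ) ≤ α n ^ 2 := sq_nonneg _
      nlinarith [ih4, mul_nonneg (mul_nonneg hm4nn hBnn) han,
        mul_nonneg (mul_nonneg (mul_nonneg hm2nn hm2nn) han) han]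

set_option maxHeartbeats 1000000 in
theorem stmt_10 {Ω : Type*} [MeasurableSpace Ω] (P : Measure Ω) [IsProbabilityMeasure P]
    (α : ℕ → ℝ) (hα : ∀ i, 0 < α i) (N γ : ℝ) (hN : 0 < N) (hγ : 1 / 2 < γ)
    (hratio : ∀ k : ℕ, 1 ≤ k →
      (∑ i ∈ range (k + 1), (α i) ^ 2) / (∑ i ∈ range (k + 1), α i) ^ 2 ≤ N / (k : ℝ) ^ γ)
    (X : ℕ → Ω → ℝ) (hmeas : ∀ i, Measurable (X i))
    (hindep : iIndepFun X P)
    (hident : ∀ i, IdentDistrib (X i) (X 0) P P)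
    (μ : ℝ) (hmean : ∫ ω, X 0 ω ∂P = μ)
    (hm4 : Integrable (fun ω => (X 0 ω) ^ 4) P) :
    ∀ᵐ ω ∂P, Tendsto
      (fun k => (∑ i ∈ range (k + 1), α i * X i ω) / (∑ i ∈ range (k + 1), α i))
      atTop (nhds μ) := by
  -- integrability of powers of the centered variable
  have hY04 : Integrable (fun ω => (X 0 ω - μ) ^ 4) P := by
    refine Integrable.mono' ((hm4.const_mul 8).add (integrable_const (8 * μ ^ 4)))
      (((hmeas 0).sub measurable_const).pow_const 4).aestronglyMeasurable
      (ae_of_all _ fun ω => ?_)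
    rw [Real.norm_eq_abs, abs_of_nonneg (by positivity)]
    simp only [Pi.add_apply]
    nlinarith [sq_nonneg (X 0 ω + μ), sq_nonneg (X 0 ω - μ), sq_nonneg ((X 0 ω) ^ 2 - μ ^ 2),
      sq_nonneg ((X 0 ω - μ) ^ 2), sq_nonneg (X 0 ω), sq_nonneg μ]
  have hY0j : ∀ j, 1 ≤ j → j ≤ 4 → Integrable (fun ω => (X 0 ω - μ) ^ j) P := by
    intro j _ h4
    refine Integrable.mono' ((integrable_const 1).add hY04)
      (((hmeas 0).sub measurable_const).pow_const j).aestronglyMeasurable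
      (ae_of_all _ fun ω => ?_)
    rw [Real.norm_eq_abs]
    simp only [Pi.add_apply]
    exact abs_pow_le_one_add _ j h4
  have hidj : ∀ (i : ℕ) (j : ℕ),
      IdentDistrib (fun ω => (X i ω - μ) ^ j) (fun ω => (X 0 ω - μ) ^ j) P P :=
    fun i j => (hident i).comp ((measurable_id.sub_const μ).pow_const j)
  have hYij : ∀ i j, 1 ≤ j → j ≤ 4 → Integrable (fun ω => (X i ω - μ) ^ j) P :=
    fun i j h1 h4 => (hidj i j).integrable_iff.mpr (hY0j j h1 h4)
  have hX0int : Integrable (X 0) P := by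
    have h := hY0j 1 le_rfl (by norm_num)
    simp only [pow_one] at h
    have h2 : Integrable (fun ω => (X 0 ω - μ) + μ) P := h.add (integrable_const μ)
    simpa using h2
  have hY0mean : ∫ ω, (X 0 ω - μ) ∂P = 0 := by
    rw [integral_sub hX0int (integrable_const μ), hmean]
    simp
  have hYmean : ∀ i, ∫ ω, (X i ω - μ) ∂P = 0 := by
    intro i
    have h := (hidj i 1).integral_eq
    simp only [pow_one] at h
    rw [h, hY0mean]
  set m2 : ℝ := ∫ ω, (X 0 ω - μ) ^ 2 ∂P with hm2def
  set m4c : ℝ := ∫ ω, (X 0 ω - μ) ^ 4 ∂P with hm4def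
  have hm2nn : 0 ≤ m2 := integral_nonneg fun ω => by positivity
  have hm4nn : 0 ≤ m4c := integral_nonneg fun ω => by positivity
  set C : ℝ := m4c + 3 * m2 ^ 2 with hCdef
  have hCnn : 0 ≤ C := add_nonneg hm4nn (by positivity)
  -- apply the fourth moment bound to f i = α i * (X i - μ)
  have hmf : ∀ i, Measurable (fun ω => α i * (X i ω - μ)) :=
    fun i => ((hmeas i).sub measurable_const).const_mul _
  have hindepf : iIndepFun (fun i ω => α i * (X i ω - μ)) P :=
    hindep.comp (fun i => fun x : ℝ => α i * (x - μ))
      (fun i => (measurable_id.sub_const μ).const_mul (α i))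
  have hintf : ∀ i j, 1 ≤ j → j ≤ 4 → Integrable (fun ω => (α i * (X i ω - μ)) ^ j) P := by
    intro i j h1 h4
    have e : (fun ω => (α i * (X i ω - μ)) ^ j) = fun ω => α i ^ j * (X i ω - μ) ^ j := by
      funext ω; rw [mul_pow]
    rw [e]
    exact (hYij i j h1 h4).const_mul _
  have h0f : ∀ i, ∫ ω, α i * (X i ω - μ) ∂P = 0 := by
    intro i; rw [integral_const_mul, hYmean i, mul_zero]
  have hvf : ∀ i, ∫ ω, (α i * (X i ω - μ)) ^ 2 ∂P = α i ^ 2 * m2 := by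
    intro i
    have e : (fun ω => (α i * (X i ω - μ)) ^ 2) = fun ω => α i ^ 2 * (X i ω - μ) ^ 2 := by
      funext ω; rw [mul_pow]
    rw [e, integral_const_mul, (hidj i 2).integral_eq]
  have hqf : ∀ i, ∫ ω, (α i * (X i ω - μ)) ^ 4 ∂P ≤ α i ^ 4 * m4c := by
    intro i
    have e : (fun ω => (α i * (X i ω - μ)) ^ 4) = fun ω => α i ^ 4 * (X i ω - μ) ^ 4 := by
      funext ω; rw [mul_pow]
    rw [e, integral_const_mul, (hidj i 4).integral_eq]
  have key := aux_sum _ hmf hindepf hintf h0f α m2 m4c hm2nn hm4nn hvf hqf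
  -- notation
  set S : ℕ → Ω → ℝ := fun k ω => ∑ i ∈ range (k + 1), α i * (X i ω - μ) with hSdef
  set A : ℕ → ℝ := fun k => ∑ i ∈ range (k + 1), α i with hAdef
  set B : ℕ → ℝ := fun k => ∑ i ∈ range (k + 1), α i ^ 2 with hBdef
  have hApos : ∀ k, 0 < A k := fun k => sum_pos (fun i _ => hα i) nonempty_range_add_one
  have key4 : ∀ k, 1 ≤ k → ∫ ω, (S k ω) ^ 4 ∂P ≤ C * N ^ 2 * A k ^ 4 / ((k : ℝ) ^ γ) ^ 2 := by
    intro k hk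
    have hkpos : (0:ℝ) < (k:ℝ) := by exact_mod_cast hk
    have hkγ : (0:ℝ) < (k:ℝ) ^ γ := Real.rpow_pos_of_pos hkpos γ
    have hA := hApos k
    have hB2 : B k ≤ N * A k ^ 2 / (k:ℝ) ^ γ := by
      have h := hratio k hk
      rw [div_le_div_iff₀ (by positivity) hkγ] at h
      rw [le_div_iff₀ hkγ]
      linarith
    have hBnn : 0 ≤ B k := sum_nonneg fun i _ => sq_nonneg _
    calc ∫ ω, (S k ω) ^ 4 ∂P ≤ C * (B k) ^ 2 := (key (k + 1)).2.2.2
      _ ≤ C * (N * A k ^ 2 / (k:ℝ) ^ γ) ^ 2 :=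
          mul_le_mul_of_nonneg_left (pow_le_pow_left₀ hBnn hB2 2) hCnn
      _ = C * N ^ 2 * A k ^ 4 / ((k:ℝ) ^ γ) ^ 2 := by
          field_simp
  set s : ℕ → ℕ → Set Ω := fun n k => {ω | (1 / ((n:ℝ) + 1) * A k) ^ 4 ≤ (S k ω) ^ 4} with hsdef
  have cheb : ∀ n k, 1 ≤ k →
      P (s n k) ≤ ENNReal.ofReal ((C * N ^ 2 * ((n:ℝ) + 1) ^ 4) / ((k:ℝ) ^ γ) ^ 2) := by
    intro n k hk
    have hA := hApos k
    have hkpos : (0:ℝ) < (k:ℝ) := by exact_mod_cast hk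
    have hkγ : (0:ℝ) < (k:ℝ) ^ γ := Real.rpow_pos_of_pos hkpos γ
    have hεA : (0:ℝ) < (1 / ((n:ℝ) + 1) * A k) ^ 4 := by positivity
    have hint4 : Integrable (fun ω => (S k ω) ^ 4) P := (key (k + 1)).1 4 (by norm_num) le_rfl
    have hmar := mul_meas_ge_le_integral_of_nonneg
      (ae_of_all P fun ω => by positivity : 0 ≤ᵐ[P] fun ω => (S k ω) ^ 4) hint4
      ((1 / ((n:ℝ) + 1) * A k) ^ 4)
    have hnn : (0:ℝ) ≤ (C * N ^ 2 * ((n:ℝ) + 1) ^ 4) / ((k:ℝ) ^ γ) ^ 2 :=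
      div_nonneg (mul_nonneg (mul_nonneg hCnn (by positivity)) (by positivity)) (by positivity)
    rw [ENNReal.le_ofReal_iff_toReal_le (measure_ne_top P _) hnn]
    have htp : (P (s n k)).toReal
        ≤ (∫ ω, (S k ω) ^ 4 ∂P) / (1 / ((n:ℝ) + 1) * A k) ^ 4 := by
      rw [le_div_iff₀ hεA]
      calc (P (s n k)).toReal * (1 / ((n:ℝ) + 1) * A k) ^ 4
          = (1 / ((n:ℝ) + 1) * A k) ^ 4 * (P (s n k)).toReal := by ring
        _ ≤ ∫ ω, (S k ω) ^ 4 ∂P := hmar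
    refine htp.trans ?_
    have h1 := key4 k hk
    have h2 : (∫ ω, (S k ω) ^ 4 ∂P) / (1 / ((n:ℝ) + 1) * A k) ^ 4
        ≤ (C * N ^ 2 * A k ^ 4 / ((k:ℝ) ^ γ) ^ 2) / (1 / ((n:ℝ) + 1) * A k) ^ 4 :=
      (div_le_div_iff_of_pos_right hεA).mpr h1
    refine h2.trans (le_of_eq ?_)
    have hne1 : ((n:ℝ) + 1) ≠ 0 := by positivity
    have hne2 : A k ≠ 0 := ne_of_gt hA
    have hne3 : ((k:ℝ) ^ γ) ≠ 0 := ne_of_gt hkγ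
    field_simp
  have hBC : ∀ n : ℕ, ∀ᵐ ω ∂P, ∀ᶠ k in atTop, ω ∉ s n (k + 1) := by
    intro n
    apply ae_eventually_notMem
    have hsummable : Summable (fun k : ℕ => (C * N ^ 2 * ((n:ℝ) + 1) ^ 4) / ((k:ℝ) ^ γ) ^ 2) := by
      have h1 : Summable (fun k : ℕ => 1 / (k:ℝ) ^ (γ * 2)) :=
        Real.summable_one_div_nat_rpow.mpr (by linarith)
      refine (h1.mul_left (C * N ^ 2 * ((n:ℝ) + 1) ^ 4)).congr fun k => ?_
      rw [mul_one_div]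
      congr 1
      rw [← Real.rpow_natCast ((k:ℝ) ^ γ) 2, ← Real.rpow_mul (Nat.cast_nonneg k)]
      norm_num
    have hsum2 : Summable (fun k : ℕ =>
        (C * N ^ 2 * ((n:ℝ) + 1) ^ 4) / ((((k:ℕ) + 1 : ℕ):ℝ) ^ γ) ^ 2) :=
      (summable_nat_add_iff (f := fun k : ℕ => (C * N ^ 2 * ((n:ℝ) + 1) ^ 4) / ((k:ℝ) ^ γ) ^ 2) 1).mpr hsummable
    apply ne_top_of_le_ne_top (ENNReal.ofReal_ne_top
      (r := ∑' k : ℕ, (C * N ^ 2 * ((n:ℝ) + 1) ^ 4) / ((((k:ℕ) + 1 : ℕ):ℝ) ^ γ) ^ 2))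
    calc ∑' k : ℕ, P (s n (k + 1))
        ≤ ∑' k : ℕ, ENNReal.ofReal
            ((C * N ^ 2 * ((n:ℝ) + 1) ^ 4) / ((((k:ℕ) + 1 : ℕ):ℝ) ^ γ) ^ 2) :=
          ENNReal.tsum_le_tsum fun k => cheb n (k + 1) (Nat.le_add_left 1 k)
      _ = ENNReal.ofReal (∑' k : ℕ,
            (C * N ^ 2 * ((n:ℝ) + 1) ^ 4) / ((((k:ℕ) + 1 : ℕ):ℝ) ^ γ) ^ 2) :=
          (ENNReal.ofReal_tsum_of_nonneg (fun k => div_nonneg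
            (mul_nonneg (mul_nonneg hCnn (by positivity)) (by positivity)) (by positivity))
            hsum2).symm
  have hae : ∀ᵐ ω ∂P, ∀ n : ℕ, ∀ᶠ k in atTop, ω ∉ s n (k + 1) := ae_all_iff.mpr hBC
  filter_upwards [hae] with ω hω
  have hconv : ∀ k, (∑ i ∈ range (k + 1), α i * X i ω) / A k = S k ω / A k + μ := by
    intro k
    have hS : S k ω = (∑ i ∈ range (k + 1), α i * X i ω) - μ * A k := by
      simp only [hSdef, hAdef]
      rw [Finset.mul_sum, ← Finset.sum_sub_distrib]
      exact Finset.sum_congr rfl fun i _ => by ring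
    rw [hS]
    have hAne : A k ≠ 0 := ne_of_gt (hApos k)
    field_simp
    ring
  have hzero : Tendsto (fun k => S k ω / A k) atTop (nhds 0) := by
    rw [Metric.tendsto_atTop]
    intro ε hε
    obtain ⟨n, hn⟩ := exists_nat_one_div_lt hε
    obtain ⟨K, hK⟩ := eventually_atTop.mp (hω n)
    refine ⟨K + 1, fun k hk' => ?_⟩
    obtain ⟨j, rfl⟩ : ∃ j, k = j + 1 := ⟨k - 1, by omega⟩
    have hnot : ω ∉ s n (j + 1) := hK j (by omega)
    have hlt : (S (j + 1) ω) ^ 4 < (1 / ((n:ℝ) + 1) * A (j + 1)) ^ 4 := lt_of_not_ge hnot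
    have hA := hApos (j + 1)
    have hεn : (0:ℝ) < 1 / ((n:ℝ) + 1) := by positivity
    have habs : |S (j + 1) ω| < 1 / ((n:ℝ) + 1) * A (j + 1) := by
      by_contra hcon
      push_neg at hcon
      have h4 := pow_le_pow_left₀ (by positivity) hcon 4
      have habs4 : |S (j + 1) ω| ^ 4 = S (j + 1) ω ^ 4 := by
        rw [← abs_pow, abs_of_nonneg (by positivity)]
      rw [habs4] at h4
      linarith
    rw [Real.dist_eq, sub_zero]
    have he : |S (j + 1) ω / A (j + 1)| = |S (j + 1) ω| / A (j + 1) := by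
      rw [abs_div, abs_of_pos hA]
    rw [he]
    have h2 : |S (j + 1) ω| / A (j + 1) < 1 / ((n:ℝ) + 1) := by
      rw [div_lt_iff₀ hA]
      linarith
    linarith
  have hfin : Tendsto (fun k => S k ω / A k + μ) atTop (nhds (0 + μ)) :=
    hzero.add tendsto_const_nhds
  rw [zero_add] at hfin
  exact hfin.congr fun k => (hconv k).symm
end

section
/- Let $(V_k)_{k\ge 0}$ be a sequence of nonnegative random variables adapted to a filtration $(\mathcal{F}_k)$, and let $(\xi_k)$, $(\zeta_k)$ be nonnegative random variables with $\mathbb{E}_{\mathcal{F}_k} V_{k+1} \le V_k - \zeta_k + \xi_k$ for all $k$ and $\sum_{k}\mathbb{E}\xi_k < +\infty$. Then almost surely $(V_k)$ converges and $\sum_k \zeta_k < +\infty$. -/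
open MeasureTheory Filter
open scoped ENNReal

lemma RS_ae_summable {Ω : Type*} {m0 : MeasurableSpace Ω} (μ : Measure Ω)
    (g : ℕ → Ω → ℝ) (hpos : ∀ k, 0 ≤ᵐ[μ] g k) (hint : ∀ k, Integrable (g k) μ)
    (hsum : Summable fun k => ∫ ω, g k ω ∂μ) :
    ∀ᵐ ω ∂μ, Summable fun k => g k ω := by
  have hmeas : ∀ k, AEMeasurable (fun ω => ENNReal.ofReal (g k ω)) μ :=
    fun k => (hint k).aemeasurable.ennreal_ofReal
  have hlint : ∫⁻ ω, ∑' k, ENNReal.ofReal (g k ω) ∂μ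
      = ∑' k, ENNReal.ofReal (∫ ω, g k ω ∂μ) := by
    rw [lintegral_tsum hmeas]
    exact tsum_congr fun k =>
      (ofReal_integral_eq_lintegral_ofReal (hint k) (hpos k)).symm
  have hnn : ∀ k, 0 ≤ ∫ ω, g k ω ∂μ := fun k => integral_nonneg_of_ae (hpos k)
  have hfin : ∫⁻ ω, ∑' k, ENNReal.ofReal (g k ω) ∂μ ≠ ∞ := by
    rw [hlint, ← ENNReal.ofReal_tsum_of_nonneg hnn hsum]
    exact ENNReal.ofReal_ne_top
  have hae := ae_lt_top' (AEMeasurable.ennreal_tsum hmeas) hfin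
  filter_upwards [hae, ae_all_iff.2 hpos] with ω hω hωpos
  have h1 : Summable fun k => (ENNReal.ofReal (g k ω)).toReal :=
    ENNReal.summable_toReal hω.ne
  refine h1.congr fun k => ?_
  exact ENNReal.toReal_ofReal (hωpos k)

lemma RS_int3 {Ω : Type*} {m0 : MeasurableSpace Ω} {μ : Measure Ω} {f g h : Ω → ℝ}
    (hf : Integrable f μ) (hg : Integrable g μ) (hh : Integrable h μ) :
    ∫ ω, (f ω - g ω + h ω) ∂μ = ∫ ω, f ω ∂μ - ∫ ω, g ω ∂μ + ∫ ω, h ω ∂μ := by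
  have e1 := integral_add (hf.sub hg) hh
  simp only [Pi.sub_apply] at e1
  rw [integral_sub hf hg] at e1
  exact e1

lemma RS_int3' {Ω : Type*} {m0 : MeasurableSpace Ω} {μ : Measure Ω} {f g h : Ω → ℝ}
    (hf : Integrable f μ) (hg : Integrable g μ) (hh : Integrable h μ) :
    ∫ ω, (f ω + g ω + h ω) ∂μ = ∫ ω, f ω ∂μ + ∫ ω, g ω ∂μ + ∫ ω, h ω ∂μ := by
  have e1 := integral_add (hf.add hg) hh
  simp only [Pi.add_apply] at e1
  rw [integral_add hf hg] at e1
  exact e1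

theorem stmt_19 {Ω : Type*} {m0 : MeasurableSpace Ω} (μ : Measure Ω) [IsProbabilityMeasure μ]
    (ℱ : Filtration ℕ m0) (V ξ ζ : ℕ → Ω → ℝ)
    (hVpos : ∀ k, 0 ≤ᵐ[μ] V k) (hξpos : ∀ k, 0 ≤ᵐ[μ] ξ k) (hζpos : ∀ k, 0 ≤ᵐ[μ] ζ k)
    (hadapt : Adapted ℱ V)
    (hVint : ∀ k, Integrable (V k) μ) (hξint : ∀ k, Integrable (ξ k) μ)
    (hζint : ∀ k, Integrable (ζ k) μ)
    (hrec : ∀ k, μ[V (k + 1) | ℱ k] ≤ᵐ[μ] fun ω => V k ω - ζ k ω + ξ k ω)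
    (hsum : Summable fun k => ∫ ω, ξ k ω ∂μ) :
    ∀ᵐ ω ∂μ, (∃ l : ℝ, Tendsto (fun k => V k ω) atTop (nhds l)) ∧
      Summable (fun k => ζ k ω) := by
  set I : ℕ → ℝ := fun k => ∫ ω, V k ω ∂μ with hIdef
  set Z : ℕ → ℝ := fun k => ∫ ω, ζ k ω ∂μ with hZdef
  set X : ℕ → ℝ := fun k => ∫ ω, ξ k ω ∂μ with hXdef
  have hXnn : ∀ k, 0 ≤ X k := fun k => integral_nonneg_of_ae (hξpos k)
  have hZnn : ∀ k, 0 ≤ Z k := fun k => integral_nonneg_of_ae (hζpos k)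
  have hInn : ∀ k, 0 ≤ I k := fun k => integral_nonneg_of_ae (hVpos k)
  have hstep : ∀ k, I (k + 1) + Z k ≤ I k + X k := by
    intro k
    have h1 : ∫ ω, (μ[V (k + 1)|ℱ k]) ω ∂μ = I (k + 1) := integral_condExp (ℱ.le k)
    have h2 : ∫ ω, (V k ω - ζ k ω + ξ k ω) ∂μ = I k - Z k + X k :=
      RS_int3 (hVint k) (hζint k) (hξint k)
    have h3 := integral_mono_ae integrable_condExp
      (((hVint k).sub (hζint k)).add (hξint k)) (hrec k)
    simp only [Pi.add_apply, Pi.sub_apply] at h3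
    rw [h1, h2] at h3
    linarith
  have hIbd : ∀ n, I n + ∑ i ∈ Finset.range n, Z i ≤ I 0 + ∑ i ∈ Finset.range n, X i := by
    intro n
    induction n with
    | zero => simp
    | succ n ih =>
      rw [Finset.sum_range_succ, Finset.sum_range_succ]
      have := hstep n
      linarith
  have hXle : ∀ n, ∑ i ∈ Finset.range n, X i ≤ ∑' i, X i :=
    fun n => Summable.sum_le_tsum _ (fun i _ => hXnn i) hsum
  have hZsum : Summable Z := by
    apply summable_of_sum_range_le hZnn (c := I 0 + ∑' i, X i)
    intro n
    have h1 := hIbd n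
    have h2 := hXle n
    have h3 := hInn n
    linarith
  have hZle : ∀ n, ∑ i ∈ Finset.range n, Z i ≤ ∑' i, Z i :=
    fun n => Summable.sum_le_tsum _ (fun i _ => hZnn i) hZsum
  have hIle : ∀ n, I n ≤ I 0 + ∑' i, X i := by
    intro n
    have h1 := hIbd n
    have h2 := hXle n
    have h3 : (0:ℝ) ≤ ∑ i ∈ Finset.range n, Z i := Finset.sum_nonneg fun i _ => hZnn i
    linarith
  -- conditional versions
  set ζ' : ℕ → Ω → ℝ := fun k => μ[ζ k | ℱ k] with hζ'def
  set ξ' : ℕ → Ω → ℝ := fun k => μ[ξ k | ℱ k] with hξ'def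
  have hζ'int : ∀ k, Integrable (ζ' k) μ := fun k => integrable_condExp
  have hξ'int : ∀ k, Integrable (ξ' k) μ := fun k => integrable_condExp
  have hζ'pos : ∀ k, 0 ≤ᵐ[μ] ζ' k := fun k => condExp_nonneg (hζpos k)
  have hξ'pos : ∀ k, 0 ≤ᵐ[μ] ξ' k := fun k => condExp_nonneg (hξpos k)
  have hζ'Z : ∀ k, ∫ ω, ζ' k ω ∂μ = Z k := fun k => integral_condExp (ℱ.le k)
  have hξ'X : ∀ k, ∫ ω, ξ' k ω ∂μ = X k := fun k => integral_condExp (ℱ.le k)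
  set A : ℕ → Ω → ℝ := fun k ω => ∑ j ∈ Finset.range k, ζ' j ω with hAdef
  set B : ℕ → Ω → ℝ := fun k ω => ∑ j ∈ Finset.range k, ξ' j ω with hBdef
  set W : ℕ → Ω → ℝ := fun k ω => V k ω + A k ω - B k ω with hWdef
  have hAmeas : ∀ k n, k ≤ n + 1 → StronglyMeasurable[ℱ n] (A k) := by
    intro k n hkn
    apply Finset.stronglyMeasurable_fun_sum
    intro j hj
    have : j ≤ n := by have := Finset.mem_range.1 hj; omega
    exact stronglyMeasurable_condExp.mono (ℱ.mono this)
  have hBmeas : ∀ k n, k ≤ n + 1 → StronglyMeasurable[ℱ n] (B k) := by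
    intro k n hkn
    apply Finset.stronglyMeasurable_fun_sum
    intro j hj
    have : j ≤ n := by have := Finset.mem_range.1 hj; omega
    exact stronglyMeasurable_condExp.mono (ℱ.mono this)
  have hAint : ∀ k, Integrable (A k) μ :=
    fun k => integrable_finset_sum _ fun j _ => hζ'int j
  have hBint : ∀ k, Integrable (B k) μ :=
    fun k => integrable_finset_sum _ fun j _ => hξ'int j
  have hWadp : Adapted ℱ W := by
    intro k
    exact ((hadapt k).add (hAmeas k k (by omega)).measurable).sub (hBmeas k k (by omega)).measurable
  have hWint : ∀ k, Integrable (W k) μ :=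
    fun k => ((hVint k).add (hAint k)).sub (hBint k)
  -- supermartingale property
  have hV1 : ∀ k, μ[V (k + 1)|ℱ k] ≤ᵐ[μ] fun ω => V k ω - ζ' k ω + ξ' k ω := by
    intro k
    have h0 : μ[μ[V (k + 1)|ℱ k]|ℱ k] = μ[V (k + 1)|ℱ k] :=
      condExp_of_stronglyMeasurable (ℱ.le k) stronglyMeasurable_condExp integrable_condExp
    have h1 := condExp_mono (m := ℱ k) integrable_condExp
      (((hVint k).sub (hζint k)).add (hξint k)) (hrec k)
    rw [h0] at h1
    have hadd := condExp_add (m := ℱ k) (μ := μ) ((hVint k).sub (hζint k)) (hξint k)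
    have hsub := condExp_sub (m := ℱ k) (μ := μ) (hVint k) (hζint k)
    have hVk : μ[V k|ℱ k] = V k :=
      condExp_of_stronglyMeasurable (ℱ.le k) (hadapt k).stronglyMeasurable (hVint k)
    filter_upwards [h1, hadd, hsub] with ω h1ω h2ω h3ω
    simp only [Pi.add_apply, Pi.sub_apply] at h1ω h2ω h3ω
    rw [h2ω, h3ω, hVk] at h1ω
    exact h1ω
  have hWsuper : ∀ k, μ[W (k + 1)|ℱ k] ≤ᵐ[μ] W k := by
    intro k
    have hBc : μ[B (k + 1)|ℱ k] = B (k + 1) :=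
      condExp_of_stronglyMeasurable (ℱ.le k) (hBmeas (k + 1) k le_rfl) (hBint (k + 1))
    have hAc : μ[A (k + 1)|ℱ k] = A (k + 1) :=
      condExp_of_stronglyMeasurable (ℱ.le k) (hAmeas (k + 1) k le_rfl) (hAint (k + 1))
    have e : W (k + 1) = (V (k + 1) + A (k + 1)) - B (k + 1) := rfl
    have hc1 : μ[W (k + 1)|ℱ k]
        =ᵐ[μ] μ[V (k + 1) + A (k + 1)|ℱ k] - μ[B (k + 1)|ℱ k] := by
      rw [e]
      exact condExp_sub ((hVint (k + 1)).add (hAint (k + 1))) (hBint (k + 1)) (ℱ k)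
    have hc2 : μ[V (k + 1) + A (k + 1)|ℱ k]
        =ᵐ[μ] μ[V (k + 1)|ℱ k] + μ[A (k + 1)|ℱ k] :=
      condExp_add (hVint (k + 1)) (hAint (k + 1)) (ℱ k)
    filter_upwards [hc1, hc2, hV1 k] with ω h1ω h2ω h3ω
    simp only [Pi.add_apply, Pi.sub_apply] at h1ω h2ω
    rw [h1ω, h2ω, hAc, hBc]
    have hA1 : A (k + 1) ω = A k ω + ζ' k ω := Finset.sum_range_succ _ _
    have hB1 : B (k + 1) ω = B k ω + ξ' k ω := Finset.sum_range_succ _ _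
    have hW : W k ω = V k ω + A k ω - B k ω := rfl
    rw [hA1, hB1, hW]
    linarith
  have hsuper : Supermartingale W ℱ μ := supermartingale_nat hWadp.stronglyAdapted hWint hWsuper
  -- uniform L1 bound
  set R : ENNReal := ENNReal.ofReal (I 0 + ∑' i, X i + ∑' i, Z i + ∑' i, X i) with hRdef
  have hWbd : ∀ n, eLpNorm (W n) 1 μ ≤ R := by
    intro n
    set g : Ω → ℝ := fun ω => V n ω + A n ω + B n ω with hgdef
    have hgint : Integrable g μ := ((hVint n).add (hAint n)).add (hBint n)
    have hgpos : 0 ≤ᵐ[μ] g := by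
      filter_upwards [hVpos n, ae_all_iff.2 hζ'pos, ae_all_iff.2 hξ'pos] with ω h1 h2 h3
      simp only [Pi.zero_apply] at h1 h2 h3
      have hA0 : 0 ≤ A n ω := Finset.sum_nonneg fun j _ => h2 j
      have hB0 : 0 ≤ B n ω := Finset.sum_nonneg fun j _ => h3 j
      simp only [hgdef, Pi.zero_apply]
      linarith
    have habs : ∀ᵐ ω ∂μ, ‖W n ω‖ ≤ g ω := by
      filter_upwards [hVpos n, ae_all_iff.2 hζ'pos, ae_all_iff.2 hξ'pos] with ω h1 h2 h3
      simp only [Pi.zero_apply] at h1 h2 h3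
      have hA0 : 0 ≤ A n ω := Finset.sum_nonneg fun j _ => h2 j
      have hB0 : 0 ≤ B n ω := Finset.sum_nonneg fun j _ => h3 j
      have hW : W n ω = V n ω + A n ω - B n ω := rfl
      rw [Real.norm_eq_abs, abs_le]
      constructor <;> simp only [hgdef, hW] <;> linarith
    calc eLpNorm (W n) 1 μ ≤ eLpNorm g 1 μ := eLpNorm_mono_ae_real habs
      _ = ENNReal.ofReal (∫ ω, g ω ∂μ) := by
          rw [eLpNorm_one_eq_lintegral_enorm,
            ofReal_integral_eq_lintegral_ofReal hgint hgpos]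
          refine lintegral_congr_ae ?_
          filter_upwards [hgpos] with ω hω
          exact Real.enorm_eq_ofReal hω
      _ ≤ R := by
          apply ENNReal.ofReal_le_ofReal
          have hInt : ∫ ω, g ω ∂μ
              = I n + ∑ j ∈ Finset.range n, Z j + ∑ j ∈ Finset.range n, X j := by
            simp only [hgdef]
            rw [RS_int3' (hVint n) (hAint n) (hBint n)]
            simp only [hAdef, hBdef]
            rw [integral_finset_sum _ fun j _ => hζ'int j,
              integral_finset_sum _ fun j _ => hξ'int j]
            simp only [hζ'Z, hξ'X]
            rfl
          rw [hInt]
          have := hIle n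
          have := hZle n
          have := hXle n
          linarith
  have hsubm : Submartingale (-W) ℱ μ := hsuper.neg
  have hbdd' : ∀ n, eLpNorm ((-W) n) 1 μ ≤ R := by
    intro n
    have : (-W) n = -(W n) := rfl
    rw [this, eLpNorm_neg]
    exact hWbd n
  have hconv := hsubm.exists_ae_tendsto_of_bdd hbdd'
  have hζ'ae : ∀ᵐ ω ∂μ, Summable fun k => ζ' k ω :=
    RS_ae_summable μ ζ' hζ'pos hζ'int (hZsum.congr fun k => (hζ'Z k).symm)
  have hξ'ae : ∀ᵐ ω ∂μ, Summable fun k => ξ' k ω :=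
    RS_ae_summable μ ξ' hξ'pos hξ'int (hsum.congr fun k => (hξ'X k).symm)
  have hζae : ∀ᵐ ω ∂μ, Summable fun k => ζ k ω :=
    RS_ae_summable μ ζ hζpos hζint hZsum
  filter_upwards [hconv, hζ'ae, hξ'ae, hζae] with ω hcω hζ'ω hξ'ω hζω
  refine ⟨?_, hζω⟩
  obtain ⟨c, hc⟩ := hcω
  have hWten : Tendsto (fun n => W n ω) atTop (nhds (-c)) := by
    have := hc.neg
    simp only [Pi.neg_apply, neg_neg] at this
    exact this
  have hAten : Tendsto (fun n => A n ω) atTop (nhds (∑' j, ζ' j ω)) :=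
    hζ'ω.hasSum.tendsto_sum_nat
  have hBten : Tendsto (fun n => B n ω) atTop (nhds (∑' j, ξ' j ω)) :=
    hξ'ω.hasSum.tendsto_sum_nat
  refine ⟨-c - (∑' j, ζ' j ω) + ∑' j, ξ' j ω, ?_⟩
  have hten := (hWten.sub hAten).add hBten
  refine hten.congr fun n => ?_
  have hW : W n ω = V n ω + A n ω - B n ω := rfl
  rw [hW]
  ring
end
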